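/- Let Z and X be compact metric spaces with their Borel σ-algebras, ζ a Borel probability measure on Z, G : Z → X continuous, c : X × X → ℝ continuous and nonnegative, and ε > 0. Then inf over η ∈ Γ(G♯ζ, G♯ζ) of [∫_{X×X} c dη + ε·KL(η ‖ (G♯ζ)⊗(G♯ζ))] equals inf over η̄ ∈ Γ(ζ, ζ) of [∫_{Z×Z} c(G(z'),G(z'')) dη̄(z',z'') + ε·KL((G,G)♯η̄ ‖ (G♯ζ)⊗(G♯ζ))], where (G,G)♯η̄ is the pushforward of η̄ under (z',z'') ↦ (G(z'),G(z'')). -/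

import Mathlib

open MeasureTheory Real

open Classical in
/-- Kullback–Leibler divergence: `∫ log(dμ/dρ) dμ` if `μ ≪ ρ`, `+∞` otherwise. -/
noncomputable def KL {Ω : Type*} [MeasurableSpace Ω] (μ ρ : Measure Ω) : EReal :=
  if μ ≪ ρ then ((∫ ω, Real.log ((μ.rnDeriv ρ ω).toReal) ∂μ : ℝ) : EReal) else ⊤

/-- `γ` is a coupling of `μ` and `ν`. -/
def IsCoupling {A B : Type*} [MeasurableSpace A] [MeasurableSpace B]
    (γ : Measure (A × B)) (μ : Measure A) (ν : Measure B) : Prop :=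
  IsProbabilityMeasure γ ∧ γ.map Prod.fst = μ ∧ γ.map Prod.snd = ν

open ProbabilityTheory in
/-- Any coupling of pushforward marginals lifts to a coupling of the original marginals. -/
lemma exists_coupling_lift
    {Z X : Type*} [MetricSpace Z] [CompactSpace Z] [MeasurableSpace Z] [BorelSpace Z]
    [MetricSpace X] [CompactSpace X] [MeasurableSpace X] [BorelSpace X]
    (ζ : Measure Z) [IsProbabilityMeasure ζ]
    (G : Z → X) (hG : Continuous G)
    (η : Measure (X × X)) (hη : IsCoupling η (ζ.map G) (ζ.map G)) :
    ∃ η' : Measure (Z × Z), IsCoupling η' ζ ζ ∧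
      η'.map (fun p => (G p.1, G p.2)) = η := by
  haveI : Nonempty Z := by
    by_contra h
    rw [not_nonempty_iff] at h
    have h1 : ζ (Set.univ : Set Z) = 1 := measure_univ
    rw [Set.univ_eq_empty_iff.mpr h, measure_empty] at h1
    exact zero_ne_one h1
  have hGm : Measurable G := hG.measurable
  set μ : Measure X := ζ.map G with hμdef
  haveI : IsProbabilityMeasure μ := Measure.isProbabilityMeasure_map hGm.aemeasurable
  set ν : Measure (X × Z) := ζ.map (fun z => (G z, z)) with hνdef
  have hνmeas : Measurable (fun z : Z => (G z, z)) := hGm.prodMk measurable_id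
  haveI : IsProbabilityMeasure ν := Measure.isProbabilityMeasure_map hνmeas.aemeasurable
  set κ : Kernel X Z := ν.condKernel with hκdef
  have hνfst : ν.fst = μ := by
    rw [hνdef, Measure.fst, Measure.map_map measurable_fst hνmeas]
    rfl
  have hdis : ν.fst ⊗ₘ κ = ν := ν.disintegrate ν.condKernel
  -- the graph set
  set S : Set (X × Z) := {p | G p.2 = p.1} with hSdef
  have hSm : MeasurableSet S :=
    (isClosed_eq (hG.comp continuous_snd) continuous_fst).measurableSet
  have hνS : ν Sᶜ = 0 := by
    rw [hνdef, Measure.map_apply hνmeas hSm.compl]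
    have : (fun z : Z => (G z, z)) ⁻¹' Sᶜ = ∅ := by
      ext z; simp [hSdef]
    rw [this, measure_empty]
  have hint : ∫⁻ x, κ x (Prod.mk x ⁻¹' Sᶜ) ∂μ = 0 := by
    rw [← hνfst, ← Measure.compProd_apply hSm.compl, hdis, hνS]
  have hmeasN : Measurable fun x => κ x (Prod.mk x ⁻¹' Sᶜ) :=
    Kernel.measurable_kernel_prodMk_left hSm.compl
  have hN : ∀ᵐ x ∂μ, κ x (Prod.mk x ⁻¹' Sᶜ) = 0 := by
    have := (lintegral_eq_zero_iff hmeasN).mp hint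
    filter_upwards [this] with x hx using hx
  set N : Set X := {x | κ x (Prod.mk x ⁻¹' Sᶜ) ≠ 0} with hNdef
  have hNm : MeasurableSet N := by
    have : N = (fun x => κ x (Prod.mk x ⁻¹' Sᶜ)) ⁻¹' ({0}ᶜ) := rfl
    rw [this]
    exact hmeasN (measurableSet_singleton 0).compl
  have hμN : μ N = 0 := by
    rw [ae_iff] at hN
    simpa [hNdef] using hN
  -- pointwise: off `N`, the conditional kernel pushes forward to a Dirac mass
  have hkey : ∀ x ∉ N, (κ x).map G = Measure.dirac x := by
    intro x hx
    have h0 : κ x {z | ¬ G z = x} = 0 := by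
      have : Prod.mk x ⁻¹' Sᶜ = {z | ¬ G z = x} := rfl
      rw [← this]
      exact not_not.mp (fun h => hx h)
    haveI : IsProbabilityMeasure (κ x) := IsMarkovKernel.isProbabilityMeasure x
    ext s hs
    rw [Measure.map_apply hGm hs, Measure.dirac_apply' x hs]
    by_cases hxs : x ∈ s
    · have hc0 : κ x (G ⁻¹' s)ᶜ = 0 := by
        refine measure_mono_null ?_ h0
        intro z hz
        simp only [Set.mem_compl_iff, Set.mem_preimage] at hz
        intro hGz
        exact hz (hGz ▸ hxs)
      have h1 : κ x (G ⁻¹' s) = 1 := (prob_compl_eq_zero_iff (hGm hs)).mp hc0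
      simp [h1, hxs]
    · have h1 : κ x (G ⁻¹' s) = 0 := by
        refine measure_mono_null ?_ h0
        intro z hz
        simp only [Set.mem_preimage] at hz
        intro hGz
        exact hxs (hGz ▸ hz)
      simp [h1, hxs]
  -- the lifted coupling
  set KK : Kernel (X × X) (Z × Z) :=
    (κ.comap Prod.fst measurable_fst).prod (κ.comap Prod.snd measurable_snd) with hKKdef
  haveI : IsMarkovKernel KK := by
    rw [hKKdef]; infer_instance
  have hKKapp : ∀ p : X × X, KK p = (κ p.1).prod (κ p.2) := by
    intro p
    rw [hKKdef, Kernel.prod_apply, Kernel.comap_apply, Kernel.comap_apply]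
  haveI hηprob : IsProbabilityMeasure η := hη.1
  set η' : Measure (Z × Z) := η.bind ⇑KK with hη'def
  have hbind : ∀ s : Set (Z × Z), MeasurableSet s →
      η' s = ∫⁻ p, (κ p.1).prod (κ p.2) s ∂η := by
    intro s hs
    rw [hη'def, Measure.bind_apply hs KK.measurable.aemeasurable]
    simp_rw [hKKapp]
  -- the second marginal of the disintegration
  have hRHS : ∀ s : Set Z, MeasurableSet s → ζ s = ∫⁻ x, κ x s ∂μ := by
    intro s hs
    have h1 : ν (Prod.snd ⁻¹' s) = ∫⁻ x, κ x (Prod.mk x ⁻¹' (Prod.snd ⁻¹' s)) ∂ν.fst := by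
      conv_lhs => rw [← hdis]
      exact Measure.compProd_apply (measurable_snd hs)
    have h2 : ν (Prod.snd ⁻¹' s) = ζ s := by
      rw [hνdef, Measure.map_apply hνmeas (measurable_snd hs)]
      rfl
    rw [← h2, h1, hνfst]
    rfl
  haveI : IsProbabilityMeasure η' := by
    constructor
    rw [hbind _ MeasurableSet.univ]
    have : ∀ p : X × X, (κ p.1).prod (κ p.2) (Set.univ : Set (Z × Z)) = 1 := by
      intro p
      haveI : IsProbabilityMeasure (κ p.1) := IsMarkovKernel.isProbabilityMeasure p.1
      haveI : IsProbabilityMeasure (κ p.2) := IsMarkovKernel.isProbabilityMeasure p.2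
      haveI : IsProbabilityMeasure ((κ p.1).prod (κ p.2)) := by infer_instance
      exact measure_univ
    simp_rw [this]
    simp
  have hfst : η'.map Prod.fst = ζ := by
    ext s hs
    rw [Measure.map_apply measurable_fst hs, hbind _ (measurable_fst hs)]
    have heq : ∀ p : X × X, (κ p.1).prod (κ p.2) (Prod.fst ⁻¹' s) = κ p.1 s := by
      intro p
      haveI : IsProbabilityMeasure (κ p.2) := IsMarkovKernel.isProbabilityMeasure p.2
      rw [show Prod.fst ⁻¹' s = s ×ˢ (Set.univ : Set Z) from (Set.prod_univ).symm,
        Measure.prod_prod, measure_univ, mul_one]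
    simp_rw [heq]
    rw [hRHS s hs, ← hη.2.1, lintegral_map (κ.measurable_coe hs) measurable_fst]
  have hsnd : η'.map Prod.snd = ζ := by
    ext s hs
    rw [Measure.map_apply measurable_snd hs, hbind _ (measurable_snd hs)]
    have heq : ∀ p : X × X, (κ p.1).prod (κ p.2) (Prod.snd ⁻¹' s) = κ p.2 s := by
      intro p
      haveI : IsProbabilityMeasure (κ p.1) := IsMarkovKernel.isProbabilityMeasure p.1
      rw [show Prod.snd ⁻¹' s = (Set.univ : Set Z) ×ˢ s from (Set.univ_prod).symm,
        Measure.prod_prod, measure_univ, one_mul]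
    simp_rw [heq]
    rw [hRHS s hs, ← hη.2.2, lintegral_map (κ.measurable_coe hs) measurable_snd]
  -- the pushforward of the lift is η
  have hmm : Measurable (fun p : Z × Z => (G p.1, G p.2)) :=
    (hGm.comp measurable_fst).prodMk (hGm.comp measurable_snd)
  have hNη1 : ∀ᵐ p : X × X ∂η, p.1 ∉ N := by
    rw [ae_iff]
    have : {p : X × X | ¬ p.1 ∉ N} = Prod.fst ⁻¹' N := by ext p; simp
    rw [this, ← Measure.map_apply measurable_fst hNm, hη.2.1]
    exact hμN
  have hNη2 : ∀ᵐ p : X × X ∂η, p.2 ∉ N := by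
    rw [ae_iff]
    have : {p : X × X | ¬ p.2 ∉ N} = Prod.snd ⁻¹' N := by ext p; simp
    rw [this, ← Measure.map_apply measurable_snd hNm, hη.2.2]
    exact hμN
  have hmap : η'.map (fun p => (G p.1, G p.2)) = η := by
    ext s hs
    rw [Measure.map_apply hmm hs, hbind _ (hmm hs)]
    have hae : ∀ᵐ p : X × X ∂η,
        (κ p.1).prod (κ p.2) ((fun p : Z × Z => (G p.1, G p.2)) ⁻¹' s)
          = s.indicator (1 : X × X → ENNReal) p := by
      filter_upwards [hNη1, hNη2] with p hp1 hp2
      have hpm : (fun q : Z × Z => (G q.1, G q.2)) = Prod.map G G := rfl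
      have h1 : (κ p.1).prod (κ p.2) ((fun q : Z × Z => (G q.1, G q.2)) ⁻¹' s)
          = (((κ p.1).map G).prod ((κ p.2).map G)) s := by
        rw [Measure.map_prod_map _ _ hGm hGm,
          Measure.map_apply (hGm.prodMap hGm) hs, hpm]
      rw [h1, hkey _ hp1, hkey _ hp2, Measure.dirac_prod_dirac]
      rw [show ((p.1, p.2) : X × X) = p from rfl]
      exact Measure.dirac_apply' p hs
    rw [lintegral_congr_ae hae, lintegral_indicator_one hs]
  exact ⟨η', ⟨inferInstance, hfst, hsnd⟩, hmap⟩

theorem debias_term_reparameterization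
    {Z X : Type*} [MetricSpace Z] [CompactSpace Z] [MeasurableSpace Z] [BorelSpace Z]
    [MetricSpace X] [CompactSpace X] [MeasurableSpace X] [BorelSpace X]
    (ζ : Measure Z) [IsProbabilityMeasure ζ]
    (G : Z → X) (hG : Continuous G)
    (c : X × X → ℝ) (hc : Continuous c) (hc0 : ∀ p, 0 ≤ c p)
    (ε : ℝ) (hε : 0 < ε) :
    (⨅ η : {η : Measure (X × X) // IsCoupling η (ζ.map G) (ζ.map G)},
      ((∫ p, c p ∂η.1 : ℝ) : EReal) + (ε : EReal) * KL η.1 ((ζ.map G).prod (ζ.map G)))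
    =
    ⨅ η : {η : Measure (Z × Z) // IsCoupling η ζ ζ},
      ((∫ p, c (G p.1, G p.2) ∂η.1 : ℝ) : EReal)
        + (ε : EReal) * KL (η.1.map (fun p => (G p.1, G p.2)))
            ((ζ.map G).prod (ζ.map G)) := by
  have hGm : Measurable G := hG.measurable
  have hmm : Measurable (fun p : Z × Z => (G p.1, G p.2)) :=
    (hGm.comp measurable_fst).prodMk (hGm.comp measurable_snd)
  have hint : ∀ η' : Measure (Z × Z),
      (∫ p, c p ∂(η'.map (fun p => (G p.1, G p.2)))) = ∫ p, c (G p.1, G p.2) ∂η' := by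
    intro η'
    rw [integral_map hmm.aemeasurable hc.aestronglyMeasurable]
  apply le_antisymm
  · refine le_iInf fun η' => ?_
    obtain ⟨hprob, h1, h2⟩ := η'.2
    have hcoup : IsCoupling (η'.1.map (fun p => (G p.1, G p.2))) (ζ.map G) (ζ.map G) := by
      refine ⟨Measure.isProbabilityMeasure_map hmm.aemeasurable, ?_, ?_⟩
      · rw [Measure.map_map measurable_fst hmm,
          show (Prod.fst ∘ fun p : Z × Z => (G p.1, G p.2)) = G ∘ Prod.fst from rfl,
          ← Measure.map_map hGm measurable_fst, h1]
      · rw [Measure.map_map measurable_snd hmm,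
          show (Prod.snd ∘ fun p : Z × Z => (G p.1, G p.2)) = G ∘ Prod.snd from rfl,
          ← Measure.map_map hGm measurable_snd, h2]
    refine iInf_le_of_le ⟨_, hcoup⟩ (le_of_eq ?_)
    rw [hint η'.1]
  · refine le_iInf fun η => ?_
    obtain ⟨η', hcoup, hmap⟩ := exists_coupling_lift ζ G hG η.1 η.2
    refine iInf_le_of_le ⟨η', hcoup⟩ (le_of_eq ?_)
    rw [← hmap, hint η']
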